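/- Fix c > 0 and define φ(x) = log₂(1+x) · e^{−cx} for x ≥ 0. Then there exists a unique x* > 0 satisfying (1+x*) ln(1+x*) = 1/c, and φ'(x) > 0 for all x ∈ [0, x*) while φ'(x) < 0 for all x ∈ (x*, ∞). -/

import Mathlib

open Real

lemma g_strictMono : StrictMonoOn (fun x : ℝ => (1 + x) * Real.log (1 + x)) (Set.Ici 0) := by
  intro a ha b hb hab
  simp only [Set.mem_Ici] at ha hb
  have h1 : (0:ℝ) < 1 + b := by linarith
  have h2 : Real.log (1 + a) < Real.log (1 + b) := by
    apply Real.log_lt_log (by linarith) (by linarith)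
  have h3 : (0:ℝ) ≤ Real.log (1 + a) := Real.log_nonneg (by linarith)
  exact mul_lt_mul' (by linarith) h2 h3 h1

lemma deriv_phi (c : ℝ) (x : ℝ) (hx : -1 < x) :
    deriv (fun x : ℝ => Real.logb 2 (1 + x) * Real.exp (-c * x)) x =
      Real.exp (-c * x) / ((1 + x) * Real.log 2) *
        (1 - c * ((1 + x) * Real.log (1 + x))) := by
  have hx1 : (0:ℝ) < 1 + x := by linarith
  have h1 : HasDerivAt (fun x : ℝ => 1 + x) 1 x := (hasDerivAt_id x).const_add 1
  have h2 : HasDerivAt (fun x : ℝ => Real.log (1 + x)) (1 / (1 + x)) x :=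
    h1.log (ne_of_gt hx1)
  have h4 : HasDerivAt (fun x : ℝ => Real.log (1 + x) / Real.log 2)
      (1 / (1 + x) / Real.log 2) x := h2.div_const _
  have h5 : HasDerivAt (fun x : ℝ => Real.exp (-c * x)) (Real.exp (-c * x) * (-c)) x := by
    have : HasDerivAt (fun x : ℝ => -c * x) (-c) x := by
      simpa using (hasDerivAt_id x).const_mul (-c)
    exact this.exp
  have h : HasDerivAt (fun x : ℝ => Real.logb 2 (1 + x) * Real.exp (-c * x))
      (1 / (1 + x) / Real.log 2 * Real.exp (-c * x) +
        Real.log (1 + x) / Real.log 2 * (Real.exp (-c * x) * (-c))) x := by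
    simpa only [Real.logb] using h4.fun_mul h5
  rw [h.deriv]
  have hlog2 : Real.log 2 ≠ 0 := by
    have := Real.log_pos (by norm_num : (1:ℝ) < 2); linarith
  field_simp
  ring

theorem stmt_9 (c : ℝ) (hc : 0 < c) :
    ∃ xs : ℝ, (0 < xs ∧ (1 + xs) * Real.log (1 + xs) = 1 / c) ∧
      (∀ y : ℝ, 0 < y → (1 + y) * Real.log (1 + y) = 1 / c → y = xs) ∧
      (∀ x ∈ Set.Ico (0 : ℝ) xs,
        0 < deriv (fun x : ℝ => Real.logb 2 (1 + x) * Real.exp (-c * x)) x) ∧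
      (∀ x ∈ Set.Ioi xs,
        deriv (fun x : ℝ => Real.logb 2 (1 + x) * Real.exp (-c * x)) x < 0) := by
  set g : ℝ → ℝ := fun x => (1 + x) * Real.log (1 + x) with hg
  set M : ℝ := Real.exp (1 / c) with hM
  have hM0 : 0 ≤ M := (Real.exp_pos _).le
  have hcont : ContinuousOn g (Set.Icc 0 M) := by
    apply ContinuousOn.mul (by fun_prop)
    apply ContinuousOn.log (by fun_prop)
    intro x hx
    have := hx.1
    intro h; linarith [hx.1]
  have hg0 : g 0 = 0 := by simp [hg]
  have hgM : 1 / c ≤ g M := by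
    have h1 : (1:ℝ) ≤ 1 + M := by linarith
    have h2 : 1 / c ≤ Real.log (1 + M) := by
      calc 1 / c = Real.log M := (Real.log_exp _).symm
        _ ≤ Real.log (1 + M) := Real.log_le_log (Real.exp_pos _) (by linarith)
    have h3 : Real.log (1 + M) ≤ (1 + M) * Real.log (1 + M) :=
      le_mul_of_one_le_left (le_trans (le_of_lt (by positivity)) h2) h1
    exact le_trans h2 h3
  have hmem : 1 / c ∈ Set.Icc (g 0) (g M) := by
    constructor
    · rw [hg0]; positivity
    · exact hgM
  obtain ⟨xs, hxsmem, hxs⟩ := intermediate_value_Icc hM0 hcont hmem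
  have hxs0 : 0 < xs := by
    rcases lt_or_eq_of_le hxsmem.1 with h | h
    · exact h
    · exfalso
      rw [← h] at hxs
      rw [hg0] at hxs
      have : (0:ℝ) < 1 / c := by positivity
      linarith
  refine ⟨xs, ⟨hxs0, hxs⟩, ?_, ?_, ?_⟩
  · intro y hy hyeq
    exact g_strictMono.injOn (Set.mem_Ici.2 hy.le) (Set.mem_Ici.2 hxs0.le) (by show g y = g xs; rw [hxs]; exact hyeq)
  · intro x hx
    obtain ⟨hx0, hxlt⟩ := hx
    rw [deriv_phi c x (by linarith)]
    have hglt : g x < 1 / c := by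
      rw [← hxs]
      exact g_strictMono (Set.mem_Ici.2 hx0) (Set.mem_Ici.2 hxs0.le) hxlt
    have h1 : 0 < 1 - c * g x := by
      have : c * g x < c * (1 / c) := by
        apply mul_lt_mul_of_pos_left hglt hc
      rw [mul_one_div, div_self hc.ne'] at this
      linarith
    have h2 : 0 < Real.exp (-c * x) / ((1 + x) * Real.log 2) := by
      apply div_pos (Real.exp_pos _)
      exact mul_pos (by linarith) (Real.log_pos (by norm_num))
    exact mul_pos h2 h1
  · intro x hx
    simp only [Set.mem_Ioi] at hx
    have hx0 : 0 < x := lt_trans hxs0 hx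
    rw [deriv_phi c x (by linarith)]
    have hglt : 1 / c < g x := by
      rw [← hxs]
      exact g_strictMono (Set.mem_Ici.2 hxs0.le) (Set.mem_Ici.2 hx0.le) hx
    have h1 : 1 - c * g x < 0 := by
      have : c * (1 / c) < c * g x := mul_lt_mul_of_pos_left hglt hc
      rw [mul_one_div, div_self hc.ne'] at this
      linarith
    have h2 : 0 < Real.exp (-c * x) / ((1 + x) * Real.log 2) := by
      apply div_pos (Real.exp_pos _)
      exact mul_pos (by linarith) (Real.log_pos (by norm_num))
    exact mul_neg_of_pos_of_neg h2 h1
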